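/- Let 1 ≤ p < ∞ and let w be a weight on ℝⁿ such that w^{-1/(p-1)} is locally integrable (when p = 1, assume ess inf_{|x|≤A} w > 0 for every A > 0). Let G ⊆ L^p(w). If (i) sup_{f∈G} ‖f‖_{L^p(w)} < ∞, (ii) for every ε > 0 there exists A > 0 with (∫_{|x|>A} |f|^p w dx)^{1/p} < ε for all f ∈ G, and (iii) for every ε > 0 there exists δ > 0 with (∫_{ℝⁿ} |f(x+u) - f(x)|^p w(x) dx)^{1/p} < ε for all f ∈ G and |u| < δ, then G is relatively compact in L^p(w). -/

import Mathlib

open MeasureTheory Metric Filter ENNReal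

/-- The quantity `∫_{ℝⁿ} |f(x)|^p w(x) dx`, as an extended nonnegative real. -/
noncomputable def wInt {n : ℕ} (w : EuclideanSpace ℝ (Fin n) → ℝ) (p : ℝ)
    (f : EuclideanSpace ℝ (Fin n) → ℝ) : ℝ≥0∞ :=
  ∫⁻ x, ENNReal.ofReal (|f x| ^ p * w x)

namespace WFK

/-- weight as an `ℝ≥0∞`-valued density. -/
noncomputable def W {n : ℕ} (w : EuclideanSpace ℝ (Fin n) → ℝ) (x : EuclideanSpace ℝ (Fin n)) :
    ℝ≥0∞ := ENNReal.ofReal (w x)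

/-- the weighted `p`-energy. -/
noncomputable def J {n : ℕ} (w : EuclideanSpace ℝ (Fin n) → ℝ) (p : ℝ)
    (f : EuclideanSpace ℝ (Fin n) → ℝ) : ℝ≥0∞ :=
  ∫⁻ x, (‖f x‖₊ : ℝ≥0∞) ^ p * W w x

noncomputable def Jset {n : ℕ} (w : EuclideanSpace ℝ (Fin n) → ℝ) (p : ℝ)
    (S : Set (EuclideanSpace ℝ (Fin n))) (f : EuclideanSpace ℝ (Fin n) → ℝ) : ℝ≥0∞ :=
  ∫⁻ x in S, (‖f x‖₊ : ℝ≥0∞) ^ p * W w x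

variable {n : ℕ} {w : EuclideanSpace ℝ (Fin n) → ℝ} {p : ℝ}

lemma point_eq (hp : 1 ≤ p) (r : ℝ) (x : EuclideanSpace ℝ (Fin n)) :
    ENNReal.ofReal (|r| ^ p * w x) = (‖r‖₊ : ℝ≥0∞) ^ p * W w x := by
  rw [ENNReal.ofReal_mul (by positivity), ← enorm_eq_nnnorm, Real.enorm_eq_ofReal_abs,
    ENNReal.ofReal_rpow_of_nonneg (abs_nonneg r) (by linarith), W]

lemma wInt_eq (hp : 1 ≤ p) (f : EuclideanSpace ℝ (Fin n) → ℝ) :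
    (∫⁻ x, ENNReal.ofReal (|f x| ^ p * w x)) = J w p f :=
  lintegral_congr fun x => point_eq hp (f x) x

lemma wInt_eq_set (hp : 1 ≤ p) (S : Set (EuclideanSpace ℝ (Fin n)))
    (f : EuclideanSpace ℝ (Fin n) → ℝ) :
    (∫⁻ x in S, ENNReal.ofReal (|f x| ^ p * w x)) = Jset w p S f :=
  lintegral_congr fun x => point_eq hp (f x) x

/-- the weighted measure -/
noncomputable def μw {n : ℕ} (w : EuclideanSpace ℝ (Fin n) → ℝ) :
    Measure (EuclideanSpace ℝ (Fin n)) :=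
  (volume : Measure (EuclideanSpace ℝ (Fin n))).withDensity (W w)

lemma lintegral_μw (hw_meas : Measurable w) (F : EuclideanSpace ℝ (Fin n) → ℝ≥0∞) :
    ∫⁻ x, F x ∂(μw w) = ∫⁻ x, F x * W w x := by
  rw [μw, show (volume.withDensity (W w) : Measure (EuclideanSpace ℝ (Fin n)))
      = volume.withDensity (fun x => ENNReal.ofReal (w x)) from rfl]
  simp only [W]
  rw [lintegral_withDensity_eq_lintegral_mul_non_measurable _
      hw_meas.ennreal_ofReal (Eventually.of_forall fun x => ENNReal.ofReal_lt_top)]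
  exact lintegral_congr fun x => mul_comm _ _

lemma J_eq_lintegral_μw (hw_meas : Measurable w) (f : EuclideanSpace ℝ (Fin n) → ℝ) :
    J w p f = ∫⁻ x, (‖f x‖₊ : ℝ≥0∞) ^ p ∂(μw w) := by
  rw [lintegral_μw hw_meas]; rfl

lemma eLpNorm'_eq_J (hw_meas : Measurable w) (f : EuclideanSpace ℝ (Fin n) → ℝ) :
    eLpNorm' f p (μw w) = (J w p f) ^ (1 / p) := by
  rw [eLpNorm', J_eq_lintegral_μw hw_meas]; rfl

lemma J_eq_eLpNorm' (hp : 1 ≤ p) (hw_meas : Measurable w) (f : EuclideanSpace ℝ (Fin n) → ℝ) :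
    J w p f = (eLpNorm' f p (μw w)) ^ p := by
  have hp0 : p ≠ 0 := by positivity
  rw [eLpNorm'_eq_J hw_meas, ← ENNReal.rpow_mul, one_div, inv_mul_cancel₀ hp0, ENNReal.rpow_one]

lemma J_indicator (hp : 1 ≤ p) {S : Set (EuclideanSpace ℝ (Fin n))} (hS : MeasurableSet S)
    (f : EuclideanSpace ℝ (Fin n) → ℝ) : J w p (S.indicator f) = Jset w p S f := by
  have hp0 : 0 < p := by linarith
  rw [J, Jset, ← lintegral_indicator hS]
  refine lintegral_congr fun x => ?_
  by_cases hx : x ∈ S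
  · simp [Set.indicator_of_mem hx]
  · simp [Set.indicator_of_notMem hx, ENNReal.zero_rpow_of_pos hp0]

lemma Jset_le_J (S : Set (EuclideanSpace ℝ (Fin n))) (f : EuclideanSpace ℝ (Fin n) → ℝ) :
    Jset w p S f ≤ J w p f :=
  setLIntegral_le_lintegral _ _

/-! ### Translation lemmas -/

lemma restrict_ball_map (x : EuclideanSpace ℝ (Fin n)) (r : ℝ) :
    (volume : Measure (EuclideanSpace ℝ (Fin n))).restrict (ball x r)
      = Measure.map (fun z => x + z) (volume.restrict (ball (0 : EuclideanSpace ℝ (Fin n)) r)) := by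
  have hmp := measurePreserving_add_left (volume : Measure (EuclideanSpace ℝ (Fin n))) x
  have hpre : ((fun z => x + z) ⁻¹' (ball x r) : Set (EuclideanSpace ℝ (Fin n)))
      = ball (0 : EuclideanSpace ℝ (Fin n)) r := by
    ext z
    simp [mem_ball, dist_eq_norm, add_sub_cancel_left]
  conv_lhs => rw [← hmp.map_eq]
  rw [Measure.restrict_map (measurable_const_add x) measurableSet_ball, hpre]

lemma lintegral_ball_shift (F : EuclideanSpace ℝ (Fin n) → ℝ≥0∞) (hF : Measurable F)
    (x : EuclideanSpace ℝ (Fin n)) (r : ℝ) :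
    ∫⁻ z in ball x r, F z = ∫⁻ z in ball (0 : EuclideanSpace ℝ (Fin n)) r, F (x + z) := by
  rw [restrict_ball_map, lintegral_map hF (measurable_const_add x)]

lemma integral_ball_shift (f : EuclideanSpace ℝ (Fin n) → ℝ) (hf : Measurable f)
    (x : EuclideanSpace ℝ (Fin n)) (r : ℝ) :
    ∫ z in ball x r, f z = ∫ z in ball (0 : EuclideanSpace ℝ (Fin n)) r, f (x + z) := by
  rw [restrict_ball_map, integral_map (measurable_const_add x).aemeasurable
    hf.stronglyMeasurable.aestronglyMeasurable]

lemma integrableOn_ball_shift (f : EuclideanSpace ℝ (Fin n) → ℝ) (hf : Measurable f)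
    (x : EuclideanSpace ℝ (Fin n)) (r : ℝ) (h : IntegrableOn f (ball x r) volume) :
    IntegrableOn (fun z => f (x + z)) (ball (0 : EuclideanSpace ℝ (Fin n)) r) volume := by
  rw [IntegrableOn] at h ⊢
  rw [restrict_ball_map, integrable_map_measure hf.stronglyMeasurable.aestronglyMeasurable
    (measurable_const_add x).aemeasurable] at h
  exact h

lemma ball_sub_cB {x : EuclideanSpace ℝ (Fin n)} {r R : ℝ} (h : ‖x‖ + r ≤ R) :
    ball x r ⊆ closedBall (0 : EuclideanSpace ℝ (Fin n)) R := by
  intro z hz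
  rw [mem_ball, dist_eq_norm] at hz
  rw [mem_closedBall_zero_iff]
  calc ‖z‖ = ‖z - x + x‖ := by rw [sub_add_cancel]
  _ ≤ ‖z - x‖ + ‖x‖ := norm_add_le _ _
  _ ≤ R := by linarith

/-! ### The local `L¹` bound via Hölder -/

lemma locL1 (hp : 1 ≤ p) (hw_meas : Measurable w) (hw_nonneg : ∀ x, 0 ≤ w x)
    (hw_pos : ∀ᵐ x ∂(volume : Measure (EuclideanSpace ℝ (Fin n))), 0 < w x)
    (hw' : 1 < p → LocallyIntegrable (fun x => w x ^ (-(1 : ℝ) / (p - 1))) volume)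
    (hw1 : p = 1 → ∀ A : ℝ, 0 < A →
      0 < essInf w (volume.restrict (closedBall (0 : EuclideanSpace ℝ (Fin n)) A)))
    {R : ℝ} (hR : 0 < R) :
    ∃ C : ℝ≥0∞, C ≠ ⊤ ∧ ∀ f : EuclideanSpace ℝ (Fin n) → ℝ, Measurable f →
      (∫⁻ x in closedBall (0 : EuclideanSpace ℝ (Fin n)) R, (‖f x‖₊ : ℝ≥0∞))
        ≤ C * (J w p f) ^ (1 / p) := by
  rcases eq_or_lt_of_le hp with hp1 | hp1
  · -- p = 1
    subst hp1
    set e := essInf w (volume.restrict (closedBall (0 : EuclideanSpace ℝ (Fin n)) R)) with he_def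
    have he : 0 < e := hw1 rfl R hR
    have hne0 : ENNReal.ofReal e ≠ 0 := by simp [ENNReal.ofReal_eq_zero, not_le, he]
    refine ⟨(ENNReal.ofReal e)⁻¹, ENNReal.inv_ne_top.2 hne0, fun f hf => ?_⟩
    have hbd : IsBoundedUnder (fun a b => a ≥ b)
        (ae (volume.restrict (closedBall (0 : EuclideanSpace ℝ (Fin n)) R))) w :=
      Filter.isBoundedUnder_of ⟨0, fun x => hw_nonneg x⟩
    have hae : ∀ᵐ x ∂(volume.restrict (closedBall (0 : EuclideanSpace ℝ (Fin n)) R)),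
        ENNReal.ofReal e ≤ W w x := by
      filter_upwards [ae_essInf_le hbd] with x hx
      exact ENNReal.ofReal_le_ofReal hx
    calc (∫⁻ x in closedBall (0 : EuclideanSpace ℝ (Fin n)) R, (‖f x‖₊ : ℝ≥0∞))
        ≤ ∫⁻ x in closedBall (0 : EuclideanSpace ℝ (Fin n)) R,
            (ENNReal.ofReal e)⁻¹ * ((‖f x‖₊ : ℝ≥0∞) * W w x) := by
          refine lintegral_mono_ae ?_
          filter_upwards [hae] with x hx
          have h1 : (‖f x‖₊ : ℝ≥0∞) = (ENNReal.ofReal e)⁻¹ * (ENNReal.ofReal e * ‖f x‖₊) := by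
            rw [← mul_assoc, ENNReal.inv_mul_cancel hne0 ENNReal.ofReal_ne_top, one_mul]
          refine le_trans (le_of_eq h1) ?_
          exact mul_le_mul_right (by rw [mul_comm]; exact mul_le_mul_right hx _) _
      _ = (ENNReal.ofReal e)⁻¹ * ∫⁻ x in closedBall (0 : EuclideanSpace ℝ (Fin n)) R,
            (‖f x‖₊ : ℝ≥0∞) * W w x :=
          lintegral_const_mul' _ _ (ENNReal.inv_ne_top.2 hne0)
      _ ≤ (ENNReal.ofReal e)⁻¹ * (J w 1 f) ^ (1 / (1:ℝ)) := by
          gcongr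
          simp only [one_div, inv_one, ENNReal.rpow_one]
          refine le_trans (setLIntegral_le_lintegral _ _) ?_
          simp [J, ENNReal.rpow_one]
  · -- 1 < p
    have hp0 : (0:ℝ) < p := by linarith
    have hp1' : p - 1 ≠ 0 := by linarith
    have hpq : p.HolderConjugate (p / (p-1)) := Real.HolderConjugate.conjExponent hp1
    set q : ℝ := p / (p - 1) with hq_def
    have hq0 : 0 < q := hpq.symm.pos
    have hI : (∫⁻ x in closedBall (0 : EuclideanSpace ℝ (Fin n)) R,
        ENNReal.ofReal (w x ^ (-(1:ℝ)/(p-1)))) < ⊤ := by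
      have hint : IntegrableOn (fun x => w x ^ (-(1 : ℝ) / (p - 1)))
          (closedBall (0 : EuclideanSpace ℝ (Fin n)) R) volume :=
        (hw' hp1).integrableOn_isCompact (isCompact_closedBall _ _)
      refine lt_of_le_of_lt (lintegral_mono fun x => ?_) hint.2
      rw [Real.enorm_eq_ofReal_abs]
      exact ENNReal.ofReal_le_ofReal (le_abs_self _)
    refine ⟨(∫⁻ x in closedBall (0 : EuclideanSpace ℝ (Fin n)) R,
        ENNReal.ofReal (w x ^ (-(1:ℝ)/(p-1)))) ^ (1/q),
      (ENNReal.rpow_lt_top_of_nonneg (by positivity) hI.ne).ne, fun f hf => ?_⟩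
    have haepos : ∀ᵐ x ∂(volume.restrict (closedBall (0 : EuclideanSpace ℝ (Fin n)) R)),
        0 < w x := ae_restrict_of_ae hw_pos
    have h0 : (∫⁻ x in closedBall (0 : EuclideanSpace ℝ (Fin n)) R, (‖f x‖₊ : ℝ≥0∞))
        = ∫⁻ x in closedBall (0 : EuclideanSpace ℝ (Fin n)) R,
            ((‖f x‖₊ : ℝ≥0∞) * (W w x) ^ (1/p)) * ((W w x) ^ (-(1/p))) := by
      refine lintegral_congr_ae ?_
      filter_upwards [haepos] with x hx
      have hW0 : W w x ≠ 0 := by simp [W, ENNReal.ofReal_eq_zero, not_le, hx]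
      rw [mul_assoc, ← ENNReal.rpow_add _ _ hW0 ENNReal.ofReal_ne_top, add_neg_cancel,
        ENNReal.rpow_zero, mul_one]
    rw [h0]
    have hWm : Measurable (W w) := hw_meas.ennreal_ofReal
    have hF : AEMeasurable (fun x => (‖f x‖₊ : ℝ≥0∞) * (W w x) ^ (1/p))
        (volume.restrict (closedBall (0 : EuclideanSpace ℝ (Fin n)) R)) :=
      (hf.enorm.mul (hWm.pow measurable_const)).aemeasurable
    have hG : AEMeasurable (fun x => (W w x) ^ (-(1/p)))
        (volume.restrict (closedBall (0 : EuclideanSpace ℝ (Fin n)) R)) :=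
      (hWm.pow measurable_const).aemeasurable
    have hH := ENNReal.lintegral_mul_le_Lp_mul_Lq
      (volume.restrict (closedBall (0 : EuclideanSpace ℝ (Fin n)) R)) hpq hF hG
    simp only [Pi.mul_apply] at hH
    have h2 : (∫⁻ x in closedBall (0 : EuclideanSpace ℝ (Fin n)) R,
          ((W w x) ^ (-(1/p))) ^ q)
        = ∫⁻ x in closedBall (0 : EuclideanSpace ℝ (Fin n)) R,
          ENNReal.ofReal (w x ^ (-(1:ℝ)/(p-1))) := by
      refine lintegral_congr_ae ?_
      filter_upwards [haepos] with x hx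
      rw [← ENNReal.rpow_mul, W, ENNReal.ofReal_rpow_of_pos hx]
      congr 1
      field_simp [hq_def]
      rw [hq_def, div_right_comm, div_self hp0.ne']
    have h3 : (∫⁻ x in closedBall (0 : EuclideanSpace ℝ (Fin n)) R,
          ((‖f x‖₊ : ℝ≥0∞) * (W w x) ^ (1/p)) ^ p)
        = ∫⁻ x in closedBall (0 : EuclideanSpace ℝ (Fin n)) R,
          (‖f x‖₊ : ℝ≥0∞) ^ p * W w x := by
      refine lintegral_congr fun x => ?_
      rw [ENNReal.mul_rpow_of_nonneg _ _ hp0.le, ← ENNReal.rpow_mul]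
      congr 2
      field_simp
      rw [ENNReal.rpow_one]
    refine le_trans hH ?_
    rw [h2, h3]
    have h4 : (∫⁻ x in closedBall (0 : EuclideanSpace ℝ (Fin n)) R,
          (‖f x‖₊ : ℝ≥0∞) ^ p * W w x) ≤ J w p f := by
      simp only [J]
      exact setLIntegral_le_lintegral _ _
    calc _ ≤ (J w p f) ^ (1/p) * (∫⁻ x in closedBall (0 : EuclideanSpace ℝ (Fin n)) R,
          ENNReal.ofReal (w x ^ (-(1:ℝ)/(p-1)))) ^ (1/q) :=
        mul_le_mul_left (ENNReal.rpow_le_rpow h4 (by positivity)) _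
    _ = _ := mul_comm _ _

/-! ### The averaging operator -/

noncomputable def rho (m : ℕ) : ℝ := 1 / (m + 1)

lemma rho_pos (m : ℕ) : 0 < rho m := by rw [rho]; positivity

lemma rho_le_one (m : ℕ) : rho m ≤ 1 := by
  rw [rho, div_le_one (by positivity)]
  linarith

noncomputable def Tav {n : ℕ} (m : ℕ) (f : EuclideanSpace ℝ (Fin n) → ℝ)
    (x : EuclideanSpace ℝ (Fin n)) : ℝ :=
  ((volume (ball (0 : EuclideanSpace ℝ (Fin n)) (rho m))).toReal)⁻¹ *
    ∫ z in ball x (rho m), f z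

lemma vB_ne_zero (m : ℕ) : (volume (ball (0 : EuclideanSpace ℝ (Fin n)) (rho m))) ≠ 0 :=
  (measure_ball_pos _ _ (rho_pos m)).ne'

lemma vB_ne_top (m : ℕ) : (volume (ball (0 : EuclideanSpace ℝ (Fin n)) (rho m))) ≠ ⊤ :=
  measure_ball_lt_top.ne

lemma enorm_inv_toReal (m : ℕ) :
    (‖((volume (ball (0 : EuclideanSpace ℝ (Fin n)) (rho m))).toReal)⁻¹‖₊ : ℝ≥0∞)
      = (volume (ball (0 : EuclideanSpace ℝ (Fin n)) (rho m)))⁻¹ := by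
  have h0 : 0 < (volume (ball (0 : EuclideanSpace ℝ (Fin n)) (rho m))).toReal :=
    ENNReal.toReal_pos (vB_ne_zero m) (vB_ne_top m)
  rw [← enorm_eq_nnnorm, Real.enorm_eq_ofReal_abs, abs_of_nonneg (inv_nonneg.2 ENNReal.toReal_nonneg),
    ENNReal.ofReal_inv_of_pos h0, ENNReal.ofReal_toReal (vB_ne_top m)]

/-- Jensen / Hölder: `(∫_S g)^p ≤ (∫_S g^p) · (vol S)^(p-1)`. -/
lemma lint_pow_le (hp : 1 ≤ p) {S : Set (EuclideanSpace ℝ (Fin n))}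
    (g : EuclideanSpace ℝ (Fin n) → ℝ≥0∞) (hg : AEMeasurable g (volume.restrict S)) :
    (∫⁻ z in S, g z) ^ p ≤ (∫⁻ z in S, (g z) ^ p) * (volume S) ^ (p - 1) := by
  rcases eq_or_lt_of_le hp with hp1 | hp1
  · subst hp1
    simp
  · have hp0 : (0:ℝ) < p := by linarith
    have hpq : p.HolderConjugate (p / (p-1)) := Real.HolderConjugate.conjExponent hp1
    set q : ℝ := p / (p - 1) with hq_def
    have hH := ENNReal.lintegral_mul_le_Lp_mul_Lq (volume.restrict S) hpq hg
      (aemeasurable_const (b := (1:ℝ≥0∞)))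
    simp only [Pi.mul_apply, mul_one, ENNReal.one_rpow, lintegral_const,
      Measure.restrict_apply MeasurableSet.univ, Set.univ_inter, one_mul] at hH
    have := ENNReal.rpow_le_rpow hH hp0.le
    refine le_trans this (le_of_eq ?_)
    rw [ENNReal.mul_rpow_of_nonneg _ _ hp0.le, ← ENNReal.rpow_mul, ← ENNReal.rpow_mul]
    congr 2
    · field_simp
      rw [ENNReal.rpow_one]
    · field_simp [hq_def]
      rw [hq_def, div_div_eq_mul_div, mul_div_cancel_left₀ _ hp0.ne']

/-- Pointwise bound for the average. -/
lemma Tav_bound (m : ℕ) (f : EuclideanSpace ℝ (Fin n) → ℝ) (hf : Measurable f)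
    (x : EuclideanSpace ℝ (Fin n)) {R : ℝ}
    (hsub : ball x (rho m) ⊆ closedBall (0 : EuclideanSpace ℝ (Fin n)) R) :
    (‖Tav m f x‖₊ : ℝ≥0∞) ≤ (volume (ball (0 : EuclideanSpace ℝ (Fin n)) (rho m)))⁻¹ *
      ∫⁻ t in closedBall (0 : EuclideanSpace ℝ (Fin n)) R, (‖f t‖₊ : ℝ≥0∞) := by
  rw [Tav]
  calc (‖((volume (ball (0 : EuclideanSpace ℝ (Fin n)) (rho m))).toReal)⁻¹ *
        ∫ z in ball x (rho m), f z‖₊ : ℝ≥0∞)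
      = (‖((volume (ball (0 : EuclideanSpace ℝ (Fin n)) (rho m))).toReal)⁻¹‖₊ : ℝ≥0∞) *
        (‖∫ z in ball x (rho m), f z‖₊ : ℝ≥0∞) := by
        rw [nnnorm_mul]; push_cast; ring
    _ ≤ (volume (ball (0 : EuclideanSpace ℝ (Fin n)) (rho m)))⁻¹ *
        ∫⁻ t in ball x (rho m), (‖f t‖₊ : ℝ≥0∞) := by
        rw [enorm_inv_toReal]
        exact mul_le_mul_right (enorm_integral_le_lintegral_enorm _) _
    _ ≤ _ := mul_le_mul_right (lintegral_mono_set hsub) _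

/-- Equicontinuity-type bound for differences of averages. -/
lemma Tav_diff_bound (m : ℕ) (f : EuclideanSpace ℝ (Fin n) → ℝ) (hf : Measurable f)
    (hfi : ∀ x : EuclideanSpace ℝ (Fin n), IntegrableOn f (ball x (rho m)) volume)
    (x y : EuclideanSpace ℝ (Fin n)) {R : ℝ}
    (hsub : ball x (rho m) ⊆ closedBall (0 : EuclideanSpace ℝ (Fin n)) R) :
    (‖Tav m f x - Tav m f y‖₊ : ℝ≥0∞)
      ≤ (volume (ball (0 : EuclideanSpace ℝ (Fin n)) (rho m)))⁻¹ *
        ∫⁻ t in closedBall (0 : EuclideanSpace ℝ (Fin n)) R,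
          (‖f t - f (t + (y - x))‖₊ : ℝ≥0∞) := by
  set r := rho m
  set g : EuclideanSpace ℝ (Fin n) → ℝ := fun t => f t - f (t + (y - x)) with hg_def
  have hgm : Measurable g := hf.sub (hf.comp (measurable_add_const (y - x)))
  have hint1 : IntegrableOn (fun z => f (x + z)) (ball (0 : EuclideanSpace ℝ (Fin n)) r) volume :=
    integrableOn_ball_shift f hf x r (hfi x)
  have hint2 : IntegrableOn (fun z => f (y + z)) (ball (0 : EuclideanSpace ℝ (Fin n)) r) volume :=
    integrableOn_ball_shift f hf y r (hfi y)
  have hkey : Tav m f x - Tav m f y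
      = ((volume (ball (0 : EuclideanSpace ℝ (Fin n)) r)).toReal)⁻¹ *
        ∫ t in ball x r, g t := by
    rw [Tav, Tav, integral_ball_shift f hf x r, integral_ball_shift f hf y r, ← mul_sub,
      ← integral_sub hint1 hint2]
    congr 1
    rw [integral_ball_shift g hgm x r]
    congr 1
    funext z
    simp only [hg_def]
    congr 2
    abel
  rw [hkey]
  calc (‖((volume (ball (0 : EuclideanSpace ℝ (Fin n)) r)).toReal)⁻¹ *
        ∫ t in ball x r, g t‖₊ : ℝ≥0∞)
      = (‖((volume (ball (0 : EuclideanSpace ℝ (Fin n)) r)).toReal)⁻¹‖₊ : ℝ≥0∞) *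
        (‖∫ t in ball x r, g t‖₊ : ℝ≥0∞) := by
        rw [nnnorm_mul]; push_cast; ring
    _ ≤ (volume (ball (0 : EuclideanSpace ℝ (Fin n)) r))⁻¹ *
        ∫⁻ t in ball x r, (‖g t‖₊ : ℝ≥0∞) := by
        rw [enorm_inv_toReal]
        exact mul_le_mul_right (enorm_integral_le_lintegral_enorm _) _
    _ ≤ _ := mul_le_mul_right (lintegral_mono_set hsub) _

/-! ### Approximation in weighted norm -/

lemma J_sub_Tav_le (hp : 1 ≤ p) (hw_meas : Measurable w) (m : ℕ)
    (f : EuclideanSpace ℝ (Fin n) → ℝ) (hf : Measurable f)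
    (hfi : ∀ x : EuclideanSpace ℝ (Fin n), IntegrableOn f (ball x (rho m)) volume)
    (η : ℝ≥0∞)
    (hη : ∀ u : EuclideanSpace ℝ (Fin n), ‖u‖ < rho m →
      J w p (fun x => f (x + u) - f x) ≤ η) :
    J w p (fun x => f x - Tav m f x) ≤ η := by
  have hp0 : (0:ℝ) < p := by linarith
  set r := rho m with hr_def
  set vB := volume (ball (0 : EuclideanSpace ℝ (Fin n)) r) with hvB_def
  have hvB0 : vB ≠ 0 := vB_ne_zero m
  have hvBt : vB ≠ ⊤ := vB_ne_top m
  -- pointwise bound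
  have key : ∀ x : EuclideanSpace ℝ (Fin n), ((‖f x - Tav m f x‖₊ : ℝ≥0∞)) ^ p
      ≤ vB⁻¹ * ∫⁻ z in ball (0 : EuclideanSpace ℝ (Fin n)) r,
          ((‖f x - f (x + z)‖₊ : ℝ≥0∞)) ^ p := by
    intro x
    have hint : IntegrableOn (fun z => f (x + z)) (ball (0 : EuclideanSpace ℝ (Fin n)) r)
        volume := integrableOn_ball_shift f hf x r (hfi x)
    have hconst : IntegrableOn (fun _ : EuclideanSpace ℝ (Fin n) => f x)
        (ball (0 : EuclideanSpace ℝ (Fin n)) r) volume :=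
      integrableOn_const measure_ball_lt_top.ne
    have htReal : 0 < vB.toReal := ENNReal.toReal_pos hvB0 hvBt
    have hdiff : f x - Tav m f x = (vB.toReal)⁻¹ *
        ∫ z in ball (0 : EuclideanSpace ℝ (Fin n)) r, (f x - f (x + z)) := by
      rw [integral_sub hconst hint, Tav, integral_ball_shift f hf x r]
      rw [integral_const, Measure.real, Measure.restrict_apply MeasurableSet.univ, Set.univ_inter]
      simp only [smul_eq_mul, ← hvB_def, ← hr_def]
      field_simp
    have henorm : ((‖f x - Tav m f x‖₊ : ℝ≥0∞))
        ≤ vB⁻¹ * ∫⁻ z in ball (0 : EuclideanSpace ℝ (Fin n)) r,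
            (‖f x - f (x + z)‖₊ : ℝ≥0∞) := by
      rw [hdiff]
      calc ((‖(vB.toReal)⁻¹ * ∫ z in ball (0 : EuclideanSpace ℝ (Fin n)) r,
            (f x - f (x + z))‖₊ : ℝ≥0∞))
          = (‖(vB.toReal)⁻¹‖₊ : ℝ≥0∞) *
            (‖∫ z in ball (0 : EuclideanSpace ℝ (Fin n)) r, (f x - f (x + z))‖₊ : ℝ≥0∞) := by
            rw [nnnorm_mul]; push_cast; ring
        _ ≤ vB⁻¹ * ∫⁻ z in ball (0 : EuclideanSpace ℝ (Fin n)) r,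
            (‖f x - f (x + z)‖₊ : ℝ≥0∞) := by
            rw [hvB_def, hr_def]
            rw [← hr_def, ← hvB_def]
            rw [show ((‖(vB.toReal)⁻¹‖₊ : ℝ≥0∞)) = vB⁻¹ by
              rw [hvB_def, hr_def]; exact enorm_inv_toReal m]
            exact mul_le_mul_right (enorm_integral_le_lintegral_enorm _) _
    have hmeasg : AEMeasurable (fun z => (‖f x - f (x + z)‖₊ : ℝ≥0∞))
        (volume.restrict (ball (0 : EuclideanSpace ℝ (Fin n)) r)) :=
      ((measurable_const.sub (hf.comp (measurable_const_add x))).enorm).aemeasurable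
    calc ((‖f x - Tav m f x‖₊ : ℝ≥0∞)) ^ p
        ≤ (vB⁻¹ * ∫⁻ z in ball (0 : EuclideanSpace ℝ (Fin n)) r,
            (‖f x - f (x + z)‖₊ : ℝ≥0∞)) ^ p := ENNReal.rpow_le_rpow henorm hp0.le
      _ = (vB⁻¹) ^ p * (∫⁻ z in ball (0 : EuclideanSpace ℝ (Fin n)) r,
            (‖f x - f (x + z)‖₊ : ℝ≥0∞)) ^ p := ENNReal.mul_rpow_of_nonneg _ _ hp0.le
      _ ≤ (vB⁻¹) ^ p * ((∫⁻ z in ball (0 : EuclideanSpace ℝ (Fin n)) r,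
            ((‖f x - f (x + z)‖₊ : ℝ≥0∞)) ^ p) * vB ^ (p - 1)) := by
            exact mul_le_mul_right (lint_pow_le hp _ hmeasg) _
      _ = vB⁻¹ * ∫⁻ z in ball (0 : EuclideanSpace ℝ (Fin n)) r,
            ((‖f x - f (x + z)‖₊ : ℝ≥0∞)) ^ p := by
            rw [ENNReal.inv_rpow, ← ENNReal.rpow_neg]
            rw [← mul_comm (vB ^ (p-1)) _, ← mul_assoc, ← mul_comm (vB ^ (p-1)) _,
              ← ENNReal.rpow_add _ _ hvB0 hvBt]
            have : p - 1 + -p = -1 := by ring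
            rw [this, ENNReal.rpow_neg_one, mul_comm]
  -- integrate the pointwise bound
  have step1 : J w p (fun x => f x - Tav m f x)
      ≤ vB⁻¹ * ∫⁻ x, (∫⁻ z in ball (0 : EuclideanSpace ℝ (Fin n)) r,
          ((‖f x - f (x + z)‖₊ : ℝ≥0∞)) ^ p) * W w x := by
    rw [J, ← lintegral_const_mul' _ _ (ENNReal.inv_ne_top.2 hvB0)]
    refine lintegral_mono fun x => ?_
    rw [← mul_assoc]
    exact mul_le_mul_left (key x) _
  refine le_trans step1 ?_
  -- push the weight inside and apply Tonelli
  have step2 : ∀ x : EuclideanSpace ℝ (Fin n),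
      (∫⁻ z in ball (0 : EuclideanSpace ℝ (Fin n)) r,
        ((‖f x - f (x + z)‖₊ : ℝ≥0∞)) ^ p) * W w x
      = ∫⁻ z in ball (0 : EuclideanSpace ℝ (Fin n)) r,
        ((‖f x - f (x + z)‖₊ : ℝ≥0∞)) ^ p * W w x := fun x =>
    (lintegral_mul_const' _ _ ENNReal.ofReal_ne_top).symm
  have hswap : ∫⁻ x, ∫⁻ z in ball (0 : EuclideanSpace ℝ (Fin n)) r,
        ((‖f x - f (x + z)‖₊ : ℝ≥0∞)) ^ p * W w x
      = ∫⁻ z in ball (0 : EuclideanSpace ℝ (Fin n)) r, ∫⁻ x,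
        ((‖f x - f (x + z)‖₊ : ℝ≥0∞)) ^ p * W w x := by
    refine lintegral_lintegral_swap ?_
    refine Measurable.aemeasurable ?_
    have h1 : Measurable fun q : EuclideanSpace ℝ (Fin n) × EuclideanSpace ℝ (Fin n) =>
        f q.1 - f (q.1 + q.2) :=
      (hf.comp measurable_fst).sub (hf.comp (measurable_fst.add measurable_snd))
    exact (h1.enorm.pow measurable_const).mul
      ((hw_meas.comp measurable_fst).ennreal_ofReal)
  simp only [step2]
  rw [hswap]
  have step3 : ∀ z ∈ ball (0 : EuclideanSpace ℝ (Fin n)) r,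
      (∫⁻ x, ((‖f x - f (x + z)‖₊ : ℝ≥0∞)) ^ p * W w x) ≤ η := by
    intro z hz
    have : (∫⁻ x, ((‖f x - f (x + z)‖₊ : ℝ≥0∞)) ^ p * W w x)
        = J w p (fun x => f (x + z) - f x) := by
      refine lintegral_congr fun x => ?_
      simp only []
      rw [show f x - f (x + z) = -(f (x + z) - f x) by ring, nnnorm_neg]
    rw [this]
    exact hη z (mem_ball_zero_iff.1 hz)
  calc vB⁻¹ * ∫⁻ z in ball (0 : EuclideanSpace ℝ (Fin n)) r, ∫⁻ x,
        ((‖f x - f (x + z)‖₊ : ℝ≥0∞)) ^ p * W w x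
      ≤ vB⁻¹ * ∫⁻ _ in ball (0 : EuclideanSpace ℝ (Fin n)) r, η := by
        refine mul_le_mul_right (setLIntegral_mono' measurableSet_ball step3) _
    _ = vB⁻¹ * (η * vB) := by rw [setLIntegral_const]
    _ = (vB⁻¹ * vB) * η := by ring
    _ = η := by rw [ENNReal.inv_mul_cancel hvB0 hvBt, one_mul]

lemma ofReal_rpow_inv_self (hp : 1 ≤ p) {ε : ℝ} (hε : 0 ≤ ε) :
    (ENNReal.ofReal (ε ^ p)) ^ (1/p) = ENNReal.ofReal ε := by
  have hp0 : (0:ℝ) < p := by linarith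
  rw [← ENNReal.ofReal_rpow_of_nonneg hε hp0.le, ← ENNReal.rpow_mul, mul_one_div,
    div_self hp0.ne', ENNReal.rpow_one]

/-- Integrability on balls from finite weighted energy. -/
lemma integrableOn_ball_of_J (hp : 1 ≤ p) (hw_meas : Measurable w) (hw_nonneg : ∀ x, 0 ≤ w x)
    (hw_pos : ∀ᵐ x ∂(volume : Measure (EuclideanSpace ℝ (Fin n))), 0 < w x)
    (hw' : 1 < p → LocallyIntegrable (fun x => w x ^ (-(1 : ℝ) / (p - 1))) volume)
    (hw1 : p = 1 → ∀ A : ℝ, 0 < A →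
      0 < essInf w (volume.restrict (closedBall (0 : EuclideanSpace ℝ (Fin n)) A)))
    (f : EuclideanSpace ℝ (Fin n) → ℝ) (hf : Measurable f) (hJ : J w p f ≠ ⊤)
    (x : EuclideanSpace ℝ (Fin n)) (r : ℝ) (hr : 0 < r) :
    IntegrableOn f (ball x r) volume := by
  obtain ⟨C, hC, hCle⟩ := locL1 hp hw_meas hw_nonneg hw_pos hw' hw1
    (R := ‖x‖ + r) (by positivity)
  have hsub : ball x r ⊆ closedBall (0 : EuclideanSpace ℝ (Fin n)) (‖x‖ + r) :=
    ball_sub_cB le_rfl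
  refine ⟨hf.stronglyMeasurable.aestronglyMeasurable, ?_⟩
  show (∫⁻ a in ball x r, (‖f a‖₊ : ℝ≥0∞) ∂volume) < ⊤
  refine lt_of_le_of_lt (lintegral_mono_set hsub) ?_
  refine lt_of_le_of_lt (hCle f hf) ?_
  exact ENNReal.mul_lt_top hC.lt_top (ENNReal.rpow_lt_top_of_nonneg (by positivity) hJ)

/-- Uniform modulus of continuity of the averages on bounded sets. -/
lemma Tav_mod (hp : 1 ≤ p) (hw_meas : Measurable w) (hw_nonneg : ∀ x, 0 ≤ w x)
    (hw_pos : ∀ᵐ x ∂(volume : Measure (EuclideanSpace ℝ (Fin n))), 0 < w x)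
    (hw' : 1 < p → LocallyIntegrable (fun x => w x ^ (-(1 : ℝ) / (p - 1))) volume)
    (hw1 : p = 1 → ∀ A : ℝ, 0 < A →
      0 < essInf w (volume.restrict (closedBall (0 : EuclideanSpace ℝ (Fin n)) A)))
    (G : Set (EuclideanSpace ℝ (Fin n) → ℝ))
    (hG_meas : ∀ f ∈ G, Measurable f) (hG_J : ∀ f ∈ G, J w p f ≠ ⊤)
    (hiii : ∀ ε : ℝ, 0 < ε → ∃ δ : ℝ, 0 < δ ∧ ∀ f ∈ G,
      ∀ u : EuclideanSpace ℝ (Fin n), ‖u‖ < δ →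
        J w p (fun x => f (x + u) - f x) ≤ ENNReal.ofReal (ε ^ p))
    (m : ℕ) {A θ : ℝ} (hA : 0 < A) (hθ : 0 < θ) :
    ∃ δ2 : ℝ, 0 < δ2 ∧ ∀ f ∈ G, ∀ x y : EuclideanSpace ℝ (Fin n),
      ‖x‖ ≤ A → ‖y - x‖ < δ2 → |Tav m f x - Tav m f y| ≤ θ := by
  obtain ⟨C, hC, hCle⟩ := locL1 hp hw_meas hw_nonneg hw_pos hw' hw1 (R := A + 1)
    (by positivity)
  set vB := volume (ball (0 : EuclideanSpace ℝ (Fin n)) (rho m)) with hvB_def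
  set K₀ : ℝ≥0∞ := vB⁻¹ * C with hK₀_def
  have hK₀t : K₀ ≠ ⊤ := ENNReal.mul_ne_top (ENNReal.inv_ne_top.2 (vB_ne_zero m)) hC
  set ε2 : ℝ := θ / (K₀.toReal + 1) with hε2_def
  have hε2 : 0 < ε2 := by
    have : 0 ≤ K₀.toReal := ENNReal.toReal_nonneg
    rw [hε2_def]
    positivity
  obtain ⟨δ3, hδ3, hδ⟩ := hiii ε2 hε2
  refine ⟨δ3, hδ3, fun f hfG x y hx hxy => ?_⟩
  have hf := hG_meas f hfG
  have hfi : ∀ z : EuclideanSpace ℝ (Fin n), IntegrableOn f (ball z (rho m)) volume :=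
    fun z => integrableOn_ball_of_J hp hw_meas hw_nonneg hw_pos hw' hw1 f hf (hG_J f hfG)
      z _ (rho_pos m)
  have hsub : ball x (rho m) ⊆ closedBall (0 : EuclideanSpace ℝ (Fin n)) (A + 1) :=
    ball_sub_cB (by have := rho_le_one m; linarith)
  set u := y - x with hu_def
  set g : EuclideanSpace ℝ (Fin n) → ℝ := fun t => f t - f (t + u) with hg_def
  have hgm : Measurable g := hf.sub (hf.comp (measurable_add_const u))
  have hJg : J w p g ≤ ENNReal.ofReal (ε2 ^ p) := by
    have hflip : J w p g = J w p (fun t => f (t + u) - f t) := by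
      refine lintegral_congr fun t => ?_
      simp only [hg_def]
      rw [show f t - f (t + u) = -(f (t + u) - f t) by ring, nnnorm_neg]
    rw [hflip]
    exact hδ f hfG u hxy
  have hmain : ((‖Tav m f x - Tav m f y‖₊ : ℝ≥0∞)) ≤ ENNReal.ofReal θ := by
    calc ((‖Tav m f x - Tav m f y‖₊ : ℝ≥0∞))
        ≤ vB⁻¹ * ∫⁻ t in closedBall (0 : EuclideanSpace ℝ (Fin n)) (A + 1),
            (‖f t - f (t + (y - x))‖₊ : ℝ≥0∞) := Tav_diff_bound m f hf hfi x y hsub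
      _ ≤ vB⁻¹ * (C * (J w p g) ^ (1/p)) := mul_le_mul_right (hCle g hgm) _
      _ ≤ vB⁻¹ * (C * (ENNReal.ofReal (ε2 ^ p)) ^ (1/p)) := by
          gcongr
      _ = K₀ * ENNReal.ofReal ε2 := by
          rw [ofReal_rpow_inv_self hp hε2.le, hK₀_def, mul_assoc]
      _ = ENNReal.ofReal (K₀.toReal * ε2) := by
          rw [ENNReal.ofReal_mul ENNReal.toReal_nonneg, ENNReal.ofReal_toReal hK₀t]
      _ ≤ ENNReal.ofReal ((K₀.toReal + 1) * ε2) := by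
          refine ENNReal.ofReal_le_ofReal ?_
          nlinarith [ENNReal.toReal_nonneg (a := K₀)]
      _ = ENNReal.ofReal θ := by
          rw [hε2_def, mul_div_cancel₀]
          positivity
  rw [← enorm_eq_nnnorm, Real.enorm_eq_ofReal_abs] at hmain
  exact (ENNReal.ofReal_le_ofReal_iff hθ.le).1 hmain

/-- Continuity of the averages, for functions in the family. -/
lemma Tav_cont (hp : 1 ≤ p) (hw_meas : Measurable w) (hw_nonneg : ∀ x, 0 ≤ w x)
    (hw_pos : ∀ᵐ x ∂(volume : Measure (EuclideanSpace ℝ (Fin n))), 0 < w x)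
    (hw' : 1 < p → LocallyIntegrable (fun x => w x ^ (-(1 : ℝ) / (p - 1))) volume)
    (hw1 : p = 1 → ∀ A : ℝ, 0 < A →
      0 < essInf w (volume.restrict (closedBall (0 : EuclideanSpace ℝ (Fin n)) A)))
    (G : Set (EuclideanSpace ℝ (Fin n) → ℝ))
    (hG_meas : ∀ f ∈ G, Measurable f) (hG_J : ∀ f ∈ G, J w p f ≠ ⊤)
    (hiii : ∀ ε : ℝ, 0 < ε → ∃ δ : ℝ, 0 < δ ∧ ∀ f ∈ G,
      ∀ u : EuclideanSpace ℝ (Fin n), ‖u‖ < δ →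
        J w p (fun x => f (x + u) - f x) ≤ ENNReal.ofReal (ε ^ p))
    (m : ℕ) (f : EuclideanSpace ℝ (Fin n) → ℝ) (hfG : f ∈ G) :
    Continuous (Tav m f) := by
  rw [Metric.continuous_iff]
  intro x₀ ε hε
  obtain ⟨δ2, hδ2, hmod⟩ := Tav_mod hp hw_meas hw_nonneg hw_pos hw' hw1 G hG_meas hG_J hiii
    m (A := ‖x₀‖ + 1) (θ := ε/2) (by positivity) (by positivity)
  refine ⟨δ2, hδ2, fun y hy => ?_⟩
  rw [Real.dist_eq, abs_sub_comm]
  refine lt_of_le_of_lt (hmod f hfG x₀ y (by linarith [norm_nonneg x₀]) ?_) (by linarith)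
  rw [dist_eq_norm] at hy
  exact hy

end WFK

open WFK

/-- **Sufficiency in the weighted Fréchet–Kolmogorov theorem, `1 ≤ p < ∞`.**
Let `w` be a weight on `ℝⁿ` with `w^{-1/(p-1)}` locally integrable when `p > 1`
(and `ess inf_{|x|≤A} w > 0` for every `A > 0` when `p = 1`). If `G ⊆ L^p(w)` satisfies
(i) uniform boundedness, (ii) uniformly small tails, and (iii) uniform `L^p(w)`-continuity
of translates, then `G` is relatively (sequentially) compact in `L^p(w)`. -/
theorem stmt_3 {n : ℕ} (p : ℝ) (hp : 1 ≤ p)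
    (w : EuclideanSpace ℝ (Fin n) → ℝ)
    (hw_meas : Measurable w) (hw_nonneg : ∀ x, 0 ≤ w x)
    (hw_loc : LocallyIntegrable w volume)
    (hw_pos : ∀ᵐ x ∂(volume : Measure (EuclideanSpace ℝ (Fin n))), 0 < w x)
    (hw' : 1 < p → LocallyIntegrable (fun x => w x ^ (-(1 : ℝ) / (p - 1))) volume)
    (hw1 : p = 1 → ∀ A : ℝ, 0 < A →
      0 < essInf w (volume.restrict (closedBall (0 : EuclideanSpace ℝ (Fin n)) A)))
    (G : Set (EuclideanSpace ℝ (Fin n) → ℝ))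
    (hG_meas : ∀ f ∈ G, Measurable f)
    (hG_mem : ∀ f ∈ G, wInt w p f < ⊤)
    (hi : ∃ K : ℝ, ∀ f ∈ G, wInt w p f ≤ ENNReal.ofReal K)
    (hii : ∀ ε : ℝ, 0 < ε → ∃ A : ℝ, 0 < A ∧ ∀ f ∈ G,
      (∫⁻ x in {x : EuclideanSpace ℝ (Fin n) | A < ‖x‖},
          ENNReal.ofReal (|f x| ^ p * w x)) < ENNReal.ofReal (ε ^ p))
    (hiii : ∀ ε : ℝ, 0 < ε → ∃ δ : ℝ, 0 < δ ∧ ∀ f ∈ G,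
      ∀ u : EuclideanSpace ℝ (Fin n), ‖u‖ < δ →
        wInt w p (fun x => f (x + u) - f x) < ENNReal.ofReal (ε ^ p)) :
    ∀ g : ℕ → EuclideanSpace ℝ (Fin n) → ℝ, (∀ k, g k ∈ G) →
      ∃ φ : ℕ → ℕ, StrictMono φ ∧ ∃ h : EuclideanSpace ℝ (Fin n) → ℝ,
        Measurable h ∧ wInt w p h < ⊤ ∧
        Tendsto (fun k => wInt w p (fun x => g (φ k) x - h x)) atTop (nhds 0) := by
  intro g hg
  have hp0 : (0:ℝ) < p := by linarith
  obtain ⟨K, hK⟩ := hi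
  have hwInt : ∀ f : EuclideanSpace ℝ (Fin n) → ℝ, wInt w p f = J w p f :=
    fun f => WFK.wInt_eq hp f
  have hgm : ∀ k, Measurable (g k) := fun k => hG_meas _ (hg k)
  have hgJ : ∀ k, J w p (g k) ≠ ⊤ := fun k => by
    rw [← hwInt]; exact (hG_mem _ (hg k)).ne
  have hGJ : ∀ f ∈ G, J w p f ≠ ⊤ := fun f hf => by
    rw [← hwInt]; exact (hG_mem _ hf).ne
  have hgK : ∀ k, J w p (g k) ≤ ENNReal.ofReal K := fun k => by
    rw [← hwInt]; exact hK _ (hg k)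
  have hiii' : ∀ ε : ℝ, 0 < ε → ∃ δ : ℝ, 0 < δ ∧ ∀ f ∈ G,
      ∀ u : EuclideanSpace ℝ (Fin n), ‖u‖ < δ →
        J w p (fun x => f (x + u) - f x) ≤ ENNReal.ofReal (ε ^ p) := by
    intro ε hε
    obtain ⟨δ, hδ0, hδ⟩ := hiii ε hε
    exact ⟨δ, hδ0, fun f hf u hu => by rw [← hwInt]; exact (hδ f hf u hu).le⟩
  -- dense sequence
  set d : ℕ → EuclideanSpace ℝ (Fin n) := TopologicalSpace.denseSeq _ with hd_def
  -- uniform bounds at the points of the dense sequence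
  have hBex : ∀ im : ℕ × ℕ, ∃ B : ℝ, ∀ k, |Tav im.2 (g k) (d im.1)| ≤ B := by
    rintro ⟨i, m⟩
    obtain ⟨C, hC, hCle⟩ := locL1 hp hw_meas hw_nonneg hw_pos hw' hw1
      (R := ‖d i‖ + 1) (by positivity)
    set M : ℝ≥0∞ := (volume (ball (0 : EuclideanSpace ℝ (Fin n)) (rho m)))⁻¹ *
      (C * (ENNReal.ofReal K) ^ (1/p)) with hM_def
    have hMt : M ≠ ⊤ := ENNReal.mul_ne_top (ENNReal.inv_ne_top.2 (vB_ne_zero m))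
      (ENNReal.mul_ne_top hC (ENNReal.rpow_lt_top_of_nonneg (by positivity)
        ENNReal.ofReal_ne_top).ne)
    refine ⟨M.toReal, fun k => ?_⟩
    have hsub : ball (d i) (rho m) ⊆ closedBall (0 : EuclideanSpace ℝ (Fin n)) (‖d i‖ + 1) :=
      ball_sub_cB (by have := rho_le_one m; linarith)
    have h1 : ((‖Tav m (g k) (d i)‖₊ : ℝ≥0∞)) ≤ M := by
      refine le_trans (Tav_bound m (g k) (hgm k) (d i) hsub) ?_
      rw [hM_def]
      refine mul_le_mul_right ?_ _
      refine le_trans (hCle (g k) (hgm k)) ?_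
      exact mul_le_mul_right (ENNReal.rpow_le_rpow (hgK k) (by positivity)) _
    have h2 : |Tav m (g k) (d i)| = ((‖Tav m (g k) (d i)‖₊ : ℝ≥0∞)).toReal := by
      rw [← enorm_eq_nnnorm, Real.enorm_eq_ofReal_abs, ENNReal.toReal_ofReal (abs_nonneg _)]
    rw [h2]
    exact ENNReal.toReal_mono hMt h1
  choose B hB using hBex
  -- extraction of a subsequence via compactness of a countable product of intervals
  set S : Set (ℕ × ℕ → ℝ) := Set.pi Set.univ (fun im => Set.Icc (-(B im)) (B im)) with hS_def
  have hScomp : IsCompact S := isCompact_univ_pi (fun im => isCompact_Icc)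
  set v : ℕ → (ℕ × ℕ → ℝ) := fun k im => Tav im.2 (g k) (d im.1) with hv_def
  have hv : ∀ k, v k ∈ S := by
    intro k
    rw [hS_def, Set.mem_univ_pi]
    intro im
    rw [Set.mem_Icc, ← abs_le]
    exact hB im k
  obtain ⟨L, _, φ, hφ, hconv⟩ := hScomp.isSeqCompact hv
  have hpt : ∀ i m : ℕ, Tendsto (fun k => Tav m (g (φ k)) (d i)) atTop (nhds (L (i, m))) :=
    fun i m => tendsto_pi_nhds.1 hconv (i, m)
  -- the Lp setting
  set μ : Measure (EuclideanSpace ℝ (Fin n)) := μw w with hμ_def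
  set P : ℝ≥0∞ := ENNReal.ofReal p with hP_def
  have hP0 : P ≠ 0 := by simp [hP_def, ENNReal.ofReal_eq_zero, not_le, hp0]
  have hPt : P ≠ ⊤ := ENNReal.ofReal_ne_top
  haveI : Fact (1 ≤ P) := ⟨by
    rw [hP_def, ← ENNReal.ofReal_one]
    exact ENNReal.ofReal_le_ofReal hp⟩
  have heLp : ∀ f : EuclideanSpace ℝ (Fin n) → ℝ, eLpNorm f P μ = eLpNorm' f p μ :=
    fun f => by rw [eLpNorm_eq_eLpNorm' hP0 hPt, hP_def, ENNReal.toReal_ofReal hp0.le]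
  have hN_of_J : ∀ (f : EuclideanSpace ℝ (Fin n) → ℝ) {c : ℝ}, 0 ≤ c →
      J w p f ≤ ENNReal.ofReal (c ^ p) → eLpNorm' f p μ ≤ ENNReal.ofReal c := by
    intro f c hc hJc
    rw [hμ_def, WFK.eLpNorm'_eq_J hw_meas, ← ofReal_rpow_inv_self hp hc]
    exact ENNReal.rpow_le_rpow hJc (by positivity)
  have hmem : ∀ k, MemLp (g (φ k)) P μ := by
    intro k
    refine ⟨(hgm _).aestronglyMeasurable, ?_⟩
    rw [heLp, hμ_def, WFK.eLpNorm'_eq_J hw_meas]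
    exact ENNReal.rpow_lt_top_of_nonneg (by positivity) (hgJ _)
  -- the key Cauchy estimate
  have key : ∀ ε : ℝ, 0 < ε → ∃ N : ℕ, ∀ j k : ℕ, N ≤ j → N ≤ k →
      eLpNorm' (fun x => g (φ j) x - g (φ k) x) p μ ≤ ENNReal.ofReal ε := by
    intro ε hε
    set ε1 : ℝ := ε / 6 with hε1_def
    have hε1 : 0 < ε1 := by rw [hε1_def]; positivity
    obtain ⟨A, hA, htail⟩ := hii ε1 hε1
    set Bset : Set (EuclideanSpace ℝ (Fin n)) := closedBall (0 : EuclideanSpace ℝ (Fin n)) A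
      with hBset_def
    have hBmeas : MeasurableSet Bset := measurableSet_closedBall
    have hcompl : Bsetᶜ = {x : EuclideanSpace ℝ (Fin n) | A < ‖x‖} := by
      ext x
      simp [hBset_def, mem_closedBall_zero_iff, not_le]
    have htailJ : ∀ k : ℕ, Jset w p Bsetᶜ (g k) ≤ ENNReal.ofReal (ε1 ^ p) := by
      intro k
      rw [hcompl, ← WFK.wInt_eq_set hp]
      exact (htail (g k) (hg k)).le
    obtain ⟨δ, hδ0, hδ⟩ := hiii' ε1 hε1
    obtain ⟨m, hm⟩ := exists_nat_one_div_lt hδ0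
    have hmδ : rho m < δ := by rw [WFK.rho]; exact_mod_cast hm
    have happrox : ∀ k : ℕ, J w p (fun x => g k x - Tav m (g k) x)
        ≤ ENNReal.ofReal (ε1 ^ p) := by
      intro k
      refine J_sub_Tav_le hp hw_meas m (g k) (hgm k)
        (fun x => integrableOn_ball_of_J hp hw_meas hw_nonneg hw_pos hw' hw1 (g k) (hgm k)
          (hgJ k) x _ (rho_pos m)) _ (fun u hu => hδ (g k) (hg k) u (by linarith))
    -- the weight mass of the ball
    set IB : ℝ := ∫ x in Bset, w x with hIB_def
    have hIB0 : 0 ≤ IB := setIntegral_nonneg hBmeas (fun x _ => hw_nonneg x)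
    have hWB : (∫⁻ x in Bset, W w x) = ENNReal.ofReal IB := by
      rw [hIB_def, ofReal_integral_eq_lintegral_ofReal
        (hw_loc.integrableOn_isCompact (isCompact_closedBall _ _))
        (Eventually.of_forall hw_nonneg)]
      rfl
    set θ : ℝ := ε1 / (1 + IB) ^ (1/p) with hθ_def
    have h1IB : (0:ℝ) < 1 + IB := by linarith
    have hθ0 : 0 < θ := by
      rw [hθ_def]
      positivity
    have hθp : θ ^ p * IB ≤ ε1 ^ p := by
      have h2 : θ ^ p = ε1 ^ p / (1 + IB) := by
        rw [hθ_def, Real.div_rpow hε1.le (by positivity), ← Real.rpow_mul h1IB.le,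
          one_div, inv_mul_cancel₀ hp0.ne', Real.rpow_one]
      rw [h2, div_mul_eq_mul_div, div_le_iff₀ h1IB]
      nlinarith [Real.rpow_nonneg hε1.le p]
    obtain ⟨δ2, hδ2, hmod⟩ := Tav_mod hp hw_meas hw_nonneg hw_pos hw' hw1 G hG_meas hGJ hiii'
      m (A := A) (θ := θ/3) hA (by positivity)
    -- finite net
    have hcov : Bset ⊆ ⋃ i : ℕ, ball (d i) δ2 := by
      intro x _
      obtain ⟨i, hi⟩ := (TopologicalSpace.denseRange_denseSeq
        (EuclideanSpace ℝ (Fin n))).exists_dist_lt x hδ2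
      exact Set.mem_iUnion.2 ⟨i, mem_ball.2 hi⟩
    obtain ⟨t, ht⟩ := (isCompact_closedBall (0 : EuclideanSpace ℝ (Fin n)) A).elim_finite_subcover
      _ (fun i : ℕ => isOpen_ball) hcov
    have hNex : ∀ i : ℕ, ∃ N, ∀ j ≥ N, ∀ k ≥ N,
        dist (Tav m (g (φ j)) (d i)) (Tav m (g (φ k)) (d i)) < θ/3 :=
      fun i => Metric.cauchySeq_iff.1 (hpt i m).cauchySeq (θ/3) (by positivity)
    choose Nf hNf using hNex
    refine ⟨t.sup Nf, fun j k hj hk => ?_⟩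
    -- pointwise bound on the ball
    have hptw : ∀ x ∈ Bset, |Tav m (g (φ j)) x - Tav m (g (φ k)) x| ≤ θ := by
      intro x hx
      obtain ⟨i, hit, hxi⟩ := Set.mem_iUnion₂.1 (ht hx)
      have hdi : ‖d i - x‖ < δ2 := by
        rw [mem_ball, dist_eq_norm] at hxi
        rw [norm_sub_rev]
        exact hxi
      have hxA : ‖x‖ ≤ A := mem_closedBall_zero_iff.1 hx
      have h1 := hmod (g (φ j)) (hg _) x (d i) hxA hdi
      have h2 := hmod (g (φ k)) (hg _) x (d i) hxA hdi
      have h3 : |Tav m (g (φ j)) (d i) - Tav m (g (φ k)) (d i)| < θ/3 := by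
        rw [← Real.dist_eq]
        exact hNf i j (le_trans (Finset.le_sup hit) hj) k (le_trans (Finset.le_sup hit) hk)
      calc |Tav m (g (φ j)) x - Tav m (g (φ k)) x|
          ≤ |Tav m (g (φ j)) x - Tav m (g (φ j)) (d i)|
            + |Tav m (g (φ j)) (d i) - Tav m (g (φ k)) x| := abs_sub_le _ _ _
        _ ≤ |Tav m (g (φ j)) x - Tav m (g (φ j)) (d i)|
            + (|Tav m (g (φ j)) (d i) - Tav m (g (φ k)) (d i)|
              + |Tav m (g (φ k)) (d i) - Tav m (g (φ k)) x|) :=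
            add_le_add_right (abs_sub_le _ _ _) _
        _ ≤ θ := by
            have h2' : |Tav m (g (φ k)) (d i) - Tav m (g (φ k)) x| ≤ θ/3 := by
              rw [abs_sub_comm]
              exact h2
            linarith
    -- pieces
    set a : EuclideanSpace ℝ (Fin n) → ℝ := g (φ j) with ha_def
    set b : EuclideanSpace ℝ (Fin n) → ℝ := g (φ k) with hb_def
    set Ta : EuclideanSpace ℝ (Fin n) → ℝ := Tav m a with hTa_def
    set Tb : EuclideanSpace ℝ (Fin n) → ℝ := Tav m b with hTb_def
    have hTa_meas : Measurable Ta := (Tav_cont hp hw_meas hw_nonneg hw_pos hw' hw1 G hG_meas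
      hGJ hiii' m a (hg _)).measurable
    have hTb_meas : Measurable Tb := (Tav_cont hp hw_meas hw_nonneg hw_pos hw' hw1 G hG_meas
      hGJ hiii' m b (hg _)).measurable
    set P1 : EuclideanSpace ℝ (Fin n) → ℝ := Bsetᶜ.indicator a with hP1_def
    set P2 : EuclideanSpace ℝ (Fin n) → ℝ := Bsetᶜ.indicator b with hP2_def
    set P3 : EuclideanSpace ℝ (Fin n) → ℝ := Bset.indicator (fun x => a x - Ta x) with hP3_def
    set P4 : EuclideanSpace ℝ (Fin n) → ℝ := Bset.indicator (fun x => b x - Tb x) with hP4_def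
    set P5 : EuclideanSpace ℝ (Fin n) → ℝ := Bset.indicator (fun x => Ta x - Tb x) with hP5_def
    have hre : (fun x => a x - b x) =ᵐ[μ] (P1 - P2 + (P3 - P4) + P5) := by
      refine Eventually.of_forall fun x => ?_
      simp only [Pi.add_apply, Pi.sub_apply, hP1_def, hP2_def, hP3_def, hP4_def, hP5_def]
      by_cases hx : x ∈ Bset
      · rw [Set.indicator_of_notMem (by simpa using hx), Set.indicator_of_notMem
          (by simpa using hx), Set.indicator_of_mem hx, Set.indicator_of_mem hx,
          Set.indicator_of_mem hx]
        ring
      · rw [Set.indicator_of_mem (by simpa using hx), Set.indicator_of_mem (by simpa using hx),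
          Set.indicator_of_notMem hx, Set.indicator_of_notMem hx,
          Set.indicator_of_notMem hx]
        ring
    have hP1m : AEStronglyMeasurable P1 μ :=
      ((hgm _).indicator hBmeas.compl).aestronglyMeasurable
    have hP2m : AEStronglyMeasurable P2 μ :=
      ((hgm _).indicator hBmeas.compl).aestronglyMeasurable
    have hP3m : AEStronglyMeasurable P3 μ :=
      (((hgm _).sub hTa_meas).indicator hBmeas).aestronglyMeasurable
    have hP4m : AEStronglyMeasurable P4 μ :=
      (((hgm _).sub hTb_meas).indicator hBmeas).aestronglyMeasurable
    have hP5m : AEStronglyMeasurable P5 μ :=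
      ((hTa_meas.sub hTb_meas).indicator hBmeas).aestronglyMeasurable
    -- individual bounds
    have hb1 : eLpNorm' P1 p μ ≤ ENNReal.ofReal ε1 := by
      refine hN_of_J _ hε1.le ?_
      rw [hP1_def, WFK.J_indicator hp hBmeas.compl]
      exact htailJ _
    have hb2 : eLpNorm' P2 p μ ≤ ENNReal.ofReal ε1 := by
      refine hN_of_J _ hε1.le ?_
      rw [hP2_def, WFK.J_indicator hp hBmeas.compl]
      exact htailJ _
    have hb3 : eLpNorm' P3 p μ ≤ ENNReal.ofReal ε1 := by
      refine hN_of_J _ hε1.le ?_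
      rw [hP3_def, WFK.J_indicator hp hBmeas]
      exact le_trans (Jset_le_J _ _) (happrox _)
    have hb4 : eLpNorm' P4 p μ ≤ ENNReal.ofReal ε1 := by
      refine hN_of_J _ hε1.le ?_
      rw [hP4_def, WFK.J_indicator hp hBmeas]
      exact le_trans (Jset_le_J _ _) (happrox _)
    have hb5 : eLpNorm' P5 p μ ≤ ENNReal.ofReal ε1 := by
      refine hN_of_J _ hε1.le ?_
      rw [hP5_def, WFK.J_indicator hp hBmeas]
      have hbound : Jset w p Bset (fun x => Ta x - Tb x)
          ≤ ENNReal.ofReal (θ ^ p) * ENNReal.ofReal IB := by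
        rw [Jset, ← hWB, ← lintegral_const_mul' _ _ ENNReal.ofReal_ne_top]
        refine setLIntegral_mono' hBmeas fun x hx => ?_
        refine mul_le_mul_left ?_ _
        rw [← enorm_eq_nnnorm, Real.enorm_eq_ofReal_abs,
          ENNReal.ofReal_rpow_of_nonneg (abs_nonneg _) hp0.le]
        refine ENNReal.ofReal_le_ofReal ?_
        exact Real.rpow_le_rpow (abs_nonneg _) (hptw x hx) hp0.le
      refine le_trans hbound ?_
      rw [← ENNReal.ofReal_mul (by positivity)]
      exact ENNReal.ofReal_le_ofReal hθp
    -- assemble with the triangle inequality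
    have htri : eLpNorm' (fun x => a x - b x) p μ
        ≤ eLpNorm' P1 p μ + eLpNorm' P2 p μ + eLpNorm' P3 p μ + eLpNorm' P4 p μ
          + eLpNorm' P5 p μ := by
      rw [eLpNorm'_congr_ae hre]
      have t1 : eLpNorm' (P1 - P2) p μ ≤ eLpNorm' P1 p μ + eLpNorm' P2 p μ := by
        rw [sub_eq_add_neg]
        refine le_trans (eLpNorm'_add_le hP1m hP2m.neg hp) ?_
        rw [eLpNorm'_neg]
      have t2 : eLpNorm' (P3 - P4) p μ ≤ eLpNorm' P3 p μ + eLpNorm' P4 p μ := by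
        rw [sub_eq_add_neg]
        refine le_trans (eLpNorm'_add_le hP3m hP4m.neg hp) ?_
        rw [eLpNorm'_neg]
      calc eLpNorm' (P1 - P2 + (P3 - P4) + P5) p μ
          ≤ eLpNorm' (P1 - P2 + (P3 - P4)) p μ + eLpNorm' P5 p μ :=
            eLpNorm'_add_le ((hP1m.sub hP2m).add (hP3m.sub hP4m)) hP5m hp
        _ ≤ (eLpNorm' (P1 - P2) p μ + eLpNorm' (P3 - P4) p μ) + eLpNorm' P5 p μ :=
            add_le_add_left (eLpNorm'_add_le (hP1m.sub hP2m) (hP3m.sub hP4m) hp) _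
        _ ≤ _ := add_le_add (le_trans (add_le_add t1 t2) (le_of_eq (by ring))) le_rfl
    refine le_trans htri ?_
    calc eLpNorm' P1 p μ + eLpNorm' P2 p μ + eLpNorm' P3 p μ + eLpNorm' P4 p μ
          + eLpNorm' P5 p μ
        ≤ ENNReal.ofReal ε1 + ENNReal.ofReal ε1 + ENNReal.ofReal ε1 + ENNReal.ofReal ε1
          + ENNReal.ofReal ε1 := by
          gcongr
      _ = ENNReal.ofReal (ε1 + ε1 + ε1 + ε1 + ε1) := by
          rw [← ENNReal.ofReal_add hε1.le hε1.le,
            ← ENNReal.ofReal_add (by positivity) hε1.le,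
            ← ENNReal.ofReal_add (by positivity) hε1.le,
            ← ENNReal.ofReal_add (by positivity) hε1.le]
      _ ≤ ENNReal.ofReal ε := by
          refine ENNReal.ofReal_le_ofReal ?_
          rw [hε1_def]
          linarith
  -- Cauchy sequence in Lp
  set F : ℕ → Lp ℝ P μ := fun k => (hmem k).toLp _ with hF_def
  have hFcauchy : CauchySeq F := by
    rw [Metric.cauchySeq_iff]
    intro ε hε
    obtain ⟨N, hN⟩ := key (ε/2) (by positivity)
    refine ⟨N, fun j hj k hk => ?_⟩
    have hsubmem := (hmem j).sub (hmem k)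
    have hdist : dist (F j) (F k) = (eLpNorm (g (φ j) - g (φ k)) P μ).toReal := by
      rw [hF_def, dist_eq_norm, ← MemLp.toLp_sub, Lp.norm_toLp]
    rw [hdist]
    have heq : eLpNorm (g (φ j) - g (φ k)) P μ
        = eLpNorm' (fun x => g (φ j) x - g (φ k) x) p μ := heLp _
    rw [heq]
    have hle := hN j k hj hk
    calc (eLpNorm' (fun x => g (φ j) x - g (φ k) x) p μ).toReal
        ≤ (ENNReal.ofReal (ε/2)).toReal := ENNReal.toReal_mono ENNReal.ofReal_ne_top hle
      _ = ε/2 := ENNReal.toReal_ofReal (by positivity)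
      _ < ε := by linarith
  obtain ⟨Llp, hLlp⟩ := cauchySeq_tendsto_of_complete hFcauchy
  have hLsm : AEStronglyMeasurable (⇑Llp) μ := Lp.aestronglyMeasurable Llp
  refine ⟨φ, hφ, hLsm.mk _, hLsm.stronglyMeasurable_mk.measurable, ?_, ?_⟩
  · -- finiteness
    rw [hwInt, WFK.J_eq_eLpNorm' hp hw_meas,
      eLpNorm'_congr_ae hLsm.ae_eq_mk.symm, ← heLp]
    exact ENNReal.rpow_lt_top_of_nonneg hp0.le (Lp.eLpNorm_lt_top Llp).ne
  · -- convergence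
    have hterm : ∀ k, wInt w p (fun x => g (φ k) x - hLsm.mk _ x)
        = ENNReal.ofReal (dist (F k) Llp ^ p) := by
      intro k
      have hDk : ⇑(F k - Llp) =ᵐ[μ] fun x => g (φ k) x - Llp x := by
        filter_upwards [Lp.coeFn_sub (F k) Llp, (hmem k).coeFn_toLp] with x hx1 hx2
        rw [hx1, Pi.sub_apply, hF_def, hx2]
      have h1 : wInt w p (fun x => g (φ k) x - hLsm.mk _ x)
          = (eLpNorm' (fun x => g (φ k) x - Llp x) p μ) ^ p := by
        rw [hwInt, WFK.J_eq_eLpNorm' hp hw_meas]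
        congr 1
        refine eLpNorm'_congr_ae ?_
        filter_upwards [hLsm.ae_eq_mk] with x hx
        rw [← hx]
      have h2 : eLpNorm' (fun x => g (φ k) x - Llp x) p μ
          = ENNReal.ofReal (dist (F k) Llp) := by
        have h3 : eLpNorm' (fun x => g (φ k) x - Llp x) p μ = eLpNorm (⇑(F k - Llp)) P μ := by
          rw [heLp]
          exact (eLpNorm'_congr_ae hDk).symm
        rw [h3, dist_eq_norm, Lp.norm_def, ENNReal.ofReal_toReal (Lp.eLpNorm_lt_top _).ne]
      rw [h1, h2, ENNReal.ofReal_rpow_of_nonneg dist_nonneg hp0.le]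
    simp only [hterm]
    have hd0 : Tendsto (fun k => dist (F k) Llp) atTop (nhds 0) :=
      tendsto_iff_dist_tendsto_zero.1 hLlp
    have hd1 : Tendsto (fun k => dist (F k) Llp ^ p) atTop (nhds 0) := by
      have := hd0.rpow_const (p := p) (Or.inr hp0.le)
      rwa [Real.zero_rpow hp0.ne'] at this
    have := (ENNReal.continuous_ofReal.tendsto 0).comp hd1
    rwa [ENNReal.ofReal_zero] at this
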